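/- Let K ≥ 1 and let a > 0, b > 0, σ² > 0, q > 0 be real constants, let c_k > 0, h_k ≥ 0, p_k ≥ 0 for k = 1,…,K, and set d_k = h_k·√(p_k). Assume Σ_{k=1}^K c_k d_k > 0. Then the function g(η) = a·Σ_{k=1}^K c_k (d_k/√η − 1)² + b σ² q/η, defined for η > 0, attains its minimum over (0,∞) at η* = ((a·Σ_{k=1}^K c_k d_k² + b σ² q)/(a·Σ_{k=1}^K c_k d_k))². (Proposition 2: optimal denoising factor for the per-iteration AirComp aggregation error.) -/

import Mathlib

/-- Proposition 2: optimal denoising factor for the per-iteration AirComp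
aggregation error. -/
theorem optimal_denoising_factor
    (K : ℕ) (hK : 1 ≤ K) (a b σ2 q : ℝ)
    (ha : 0 < a) (hb : 0 < b) (hσ2 : 0 < σ2) (hq : 0 < q)
    (c h p d : Fin K → ℝ)
    (hc : ∀ k, 0 < c k) (hh : ∀ k, 0 ≤ h k) (hp : ∀ k, 0 ≤ p k)
    (hd : ∀ k, d k = h k * Real.sqrt (p k))
    (hpos : 0 < ∑ k, c k * d k)
    (ηstar : ℝ)
    (hηstar : ηstar =
      ((a * ∑ k, c k * (d k) ^ 2 + b * σ2 * q) / (a * ∑ k, c k * d k)) ^ 2) :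
    0 < ηstar ∧
      ∀ η : ℝ, 0 < η →
        a * (∑ k, c k * (d k / Real.sqrt ηstar - 1) ^ 2) + b * σ2 * q / ηstar ≤
        a * (∑ k, c k * (d k / Real.sqrt η - 1) ^ 2) + b * σ2 * q / η := by
  have hS2nn : 0 ≤ ∑ k, c k * (d k) ^ 2 :=
    Finset.sum_nonneg fun k _ => mul_nonneg (hc k).le (sq_nonneg _)
  set S2 := ∑ k, c k * (d k) ^ 2 with hS2
  set S1 := ∑ k, c k * d k with hS1
  set S0 := ∑ k, c k with hS0
  have hM : 0 < a * S2 + b * σ2 * q := by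
    have : 0 < b * σ2 * q := by positivity
    nlinarith [mul_nonneg ha.le hS2nn]
  have hC : 0 < a * S1 := mul_pos ha hpos
  have hηpos : 0 < ηstar := by
    rw [hηstar]; positivity
  refine ⟨hηpos, ?_⟩
  have key : ∀ x : ℝ, 0 < x →
      a * (∑ k, c k * (d k / Real.sqrt x - 1) ^ 2) + b * σ2 * q / x
      = (a * S2 + b * σ2 * q) * (1 / Real.sqrt x) ^ 2
        - 2 * (a * S1) * (1 / Real.sqrt x) + a * S0 := by
    intro x hx
    have hs : 0 < Real.sqrt x := Real.sqrt_pos.mpr hx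
    have hsx : Real.sqrt x ^ 2 = x := Real.sq_sqrt hx.le
    have hsum : (∑ k, c k * (d k / Real.sqrt x - 1) ^ 2)
        = S2 * (1 / Real.sqrt x) ^ 2 - 2 * S1 * (1 / Real.sqrt x) + S0 := by
      have hterm : ∀ k : Fin K, c k * (d k / Real.sqrt x - 1) ^ 2
          = c k * d k ^ 2 * (1 / Real.sqrt x) ^ 2
            - 2 * (c k * d k * (1 / Real.sqrt x)) + c k := by
        intro k
        obtain ⟨s, hsgen⟩ : ∃ s, Real.sqrt x = s := ⟨_, rfl⟩
        rw [hsgen] at hs ⊢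
        field_simp
        ring
      rw [Finset.sum_congr rfl fun k _ => hterm k, Finset.sum_add_distrib,
        Finset.sum_sub_distrib, ← Finset.sum_mul, ← Finset.mul_sum, ← Finset.sum_mul]
      rw [hS2, hS1, hS0]; ring
    rw [hsum]
    have : b * σ2 * q / x = b * σ2 * q * (1 / Real.sqrt x) ^ 2 := by
      rw [← hsx]; field_simp; rw [Real.sq_sqrt (by positivity)]
    rw [this]; ring
  intro η hη
  rw [key η hη, key ηstar hηpos]
  have hsstar : Real.sqrt ηstar = (a * S2 + b * σ2 * q) / (a * S1) := by
    rw [hηstar, Real.sqrt_sq (by positivity)]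
  have htstar : 1 / Real.sqrt ηstar = (a * S1) / (a * S2 + b * σ2 * q) := by
    rw [hsstar, one_div_div]
  rw [htstar]
  set t := 1 / Real.sqrt η with ht
  set u := (a * S1) / (a * S2 + b * σ2 * q) with hu
  have huu : (a * S2 + b * σ2 * q) * u = a * S1 := by
    rw [hu]; field_simp
  have h1 : (a * S2 + b * σ2 * q) * u * t = a * S1 * t := by rw [huu]
  have h2 : (a * S2 + b * σ2 * q) * u * u = a * S1 * u := by rw [huu]
  nlinarith [mul_nonneg hM.le (sq_nonneg (t - u)), h1, h2]
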